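/- For every k ∈ ℤ² with k ≠ 0 and every r > 0, the ball average ⨍_{B_r(0)} |e^{i k·h} − 1|² dh equals (4/(|k|r)²) ∫₀^{|k|r} x (1 − J₀(x)) dx, where J₀(x) := (1/2π) ∫₀^{2π} cos(x cos θ) dθ and |k| is the Euclidean norm of k. -/

import Mathlib

open MeasureTheory Real Set Filter Topology

noncomputable section

/-- Points of `ℝ²`. The flat torus `𝕋² = ℝ²/(2πℤ)²` is realized via `(2πℤ)²`-periodic
functions on `ℝ²`, with integrals taken over the fundamental domain `Q2 = [0,2π)²`. -/
abbrev V : Type := Fin 2 → ℝ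

/-- Squared Euclidean norm on `ℝ²`. -/
def sqnorm (v : V) : ℝ := v 0 ^ 2 + v 1 ^ 2

/-- Euclidean dot product on `ℝ²`. -/
def dot (a b : V) : ℝ := a 0 * b 0 + a 1 * b 1

/-- Open Euclidean ball of radius `r` centered at `0` in `ℝ²`. -/
def ball2 (r : ℝ) : Set V := {h : V | sqnorm h < r ^ 2}

/-- Fundamental domain `[0,2π)²` of the torus `ℝ²/(2πℤ)²`. -/
def Q2 : Set V := Set.univ.pi fun _ => Set.Ico (0 : ℝ) (2 * π)

/-- `(2πℤ)²`-periodicity: a function on `ℝ²` descends to the torus. -/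
def Periodic2 {α : Type*} (f : V → α) : Prop :=
  ∀ (x : V) (n : Fin 2 → ℤ), f (fun i => x i + 2 * π * (n i : ℝ)) = f x

/-- The Bessel function of the first kind of order zero,
`J₀(x) = (1/2π) ∫₀^{2π} cos(x cos θ) dθ`. -/
def J0 (x : ℝ) : ℝ := (2 * π)⁻¹ * ∫ θ in (0 : ℝ)..(2 * π), Real.cos (x * Real.cos θ)

lemma norm_exp_sub_one' (t : ℝ) :
    ‖Complex.exp (Complex.I * t) - 1‖ ^ 2 = 2 - 2 * Real.cos t := by
  rw [mul_comm, Complex.exp_mul_I]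
  rw [Complex.sq_norm, Complex.normSq_apply]
  simp [Complex.cos_ofReal_re, Complex.sin_ofReal_re, ← Complex.ofReal_sin, ← Complex.ofReal_cos]
  nlinarith [Real.sin_sq_add_cos_sq t]

lemma transfer' (r : ℝ) (g : ℝ → ℝ → ℝ) :
    (∫ h in ball2 r, g (h 0) (h 1)) =
      ∫ p in {p : ℝ × ℝ | p.1 ^ 2 + p.2 ^ 2 < r ^ 2}, g p.1 p.2 := by
  have h1 : ball2 r = (MeasurableEquiv.finTwoArrow : V ≃ᵐ ℝ × ℝ) ⁻¹'
      {p : ℝ × ℝ | p.1 ^ 2 + p.2 ^ 2 < r ^ 2} := by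
    ext h
    simp [ball2, sqnorm, MeasurableEquiv.finTwoArrow]
  rw [h1, ← MeasureTheory.MeasurePreserving.setIntegral_preimage_emb
    (volume_preserving_finTwoArrow ℝ) (MeasurableEquiv.measurableEmbedding _)
    (fun p => g p.1 p.2) _]
  rfl

lemma polar_step' (r : ℝ) (hr : 0 < r) (g : ℝ × ℝ → ℝ) :
    (∫ p in {p : ℝ × ℝ | p.1 ^ 2 + p.2 ^ 2 < r ^ 2}, g p) =
      ∫ p in Ioo (0:ℝ) r ×ˢ Ioo (-π) π, p.1 * g (polarCoord.symm p) := by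
  set D : Set (ℝ × ℝ) := {p : ℝ × ℝ | p.1 ^ 2 + p.2 ^ 2 < r ^ 2} with hD
  have hDmeas : MeasurableSet D := by
    have : IsOpen D := isOpen_lt (by fun_prop) continuous_const
    exact this.measurableSet
  have hpre : polarCoord.symm ⁻¹' D = {p : ℝ × ℝ | p.1 ^ 2 < r ^ 2} := by
    ext p
    simp only [hD, mem_preimage, Set.mem_setOf_eq, polarCoord_symm_apply]
    constructor <;> intro h <;> nlinarith [Real.sin_sq_add_cos_sq p.2]
  have hpm : MeasurableSet (polarCoord.symm ⁻¹' D) := by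
    rw [hpre]; exact (isOpen_lt (by fun_prop) continuous_const).measurableSet
  have hset : polarCoord.target ∩ polarCoord.symm ⁻¹' D = Ioo (0:ℝ) r ×ˢ Ioo (-π) π := by
    rw [polarCoord_target, hpre]
    ext p
    simp only [Set.mem_inter_iff, Set.mem_prod, mem_Ioi, mem_Ioo, Set.mem_setOf_eq]
    constructor
    · rintro ⟨⟨h1, h2⟩, h3⟩
      refine ⟨⟨h1, ?_⟩, h2⟩
      nlinarith
    · rintro ⟨⟨h1, h2⟩, h3⟩
      exact ⟨⟨h1, h3⟩, by nlinarith⟩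
  rw [← MeasureTheory.integral_indicator hDmeas, ← integral_comp_polarCoord_symm (D.indicator g)]
  have h1 : ∀ p : ℝ × ℝ, p.1 • D.indicator g (polarCoord.symm p)
      = (polarCoord.symm ⁻¹' D).indicator (fun q => q.1 * g (polarCoord.symm q)) p := by
    intro p
    by_cases h : polarCoord.symm p ∈ D <;> simp [Set.indicator, h]
  simp_rw [h1]
  rw [MeasureTheory.setIntegral_indicator hpm, hset]

lemma inner_eval' (c φ : ℝ) (ρ : ℝ) :
    (∫ θ in Ioo (-π) π, ρ * (2 - 2 * Real.cos (c * ρ * Real.cos (θ - φ))))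
      = 4 * π * (ρ * (1 - J0 (c * ρ))) := by
  have hper : Function.Periodic (fun θ : ℝ => Real.cos (c * ρ * Real.cos θ)) (2*π) :=
    fun θ => by simp [Real.cos_periodic θ]
  have hshift : (∫ θ in (-π)..π, Real.cos (c * ρ * Real.cos (θ - φ))) = 2 * π * J0 (c * ρ) := by
    rw [intervalIntegral.integral_comp_sub_right (fun θ => Real.cos (c * ρ * Real.cos θ)) φ]
    have h2 := hper.intervalIntegral_add_eq (-π - φ) 0
    have h3 : -π - φ + 2*π = π - φ := by ring
    rw [h3, zero_add] at h2
    rw [h2, J0]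
    have : (2 * π) ≠ 0 := by positivity
    field_simp
  have hic : IntervalIntegrable (fun θ => Real.cos (c * ρ * Real.cos (θ - φ))) volume (-π) π :=
    Continuous.intervalIntegrable (by fun_prop) _ _
  rw [← MeasureTheory.integral_Ioc_eq_integral_Ioo,
    ← intervalIntegral.integral_of_le (by linarith [Real.pi_pos] : (-π:ℝ) ≤ π),
    intervalIntegral.integral_const_mul,
    intervalIntegral.integral_sub intervalIntegrable_const (hic.const_mul 2),
    intervalIntegral.integral_const, intervalIntegral.integral_const_mul, hshift]
  simp only [smul_eq_mul]
  ring

lemma core' (a b r : ℝ) (hab : ¬(a = 0 ∧ b = 0)) (hr : 0 < r) :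
    (∫ p in Ioo (0:ℝ) r ×ˢ Ioo (-π) π,
        p.1 * (2 - 2 * Real.cos (a * (polarCoord.symm p).1 + b * (polarCoord.symm p).2)))
      = 4 * π * ((Real.sqrt (a^2+b^2)) ^ 2)⁻¹ *
          ∫ x in (0:ℝ)..(Real.sqrt (a^2+b^2) * r), x * (1 - J0 x) := by
  set K := Real.sqrt (a^2 + b^2) with hKdef
  have hab2 : 0 < a^2 + b^2 := by
    rcases not_and_or.mp hab with h | h
    · have := (sq_nonneg a).lt_of_ne (Ne.symm (pow_ne_zero 2 h)); nlinarith [sq_nonneg b]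
    · have := (sq_nonneg b).lt_of_ne (Ne.symm (pow_ne_zero 2 h)); nlinarith [sq_nonneg a]
  have hK : 0 < K := Real.sqrt_pos.mpr hab2
  set z : ℂ := a + b * Complex.I with hzdef
  have hKz : ‖z‖ = K := Complex.norm_add_mul_I a b
  have hz : z ≠ 0 := by
    intro h; rw [h, norm_zero] at hKz; exact (ne_of_gt hK) hKz.symm
  set φ := Complex.arg z with hφdef
  have hre : z.re = a := by simp [hzdef]
  have him : z.im = b := by simp [hzdef]
  have hA : K * Real.cos φ = a := by
    rw [hφdef, Complex.cos_arg hz, hre, hKz]; field_simp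
  have hB : K * Real.sin φ = b := by
    rw [hφdef, Complex.sin_arg z, him, hKz]; field_simp
  have hcos : ∀ ρ θ : ℝ, a * (ρ * Real.cos θ) + b * (ρ * Real.sin θ)
      = K * ρ * Real.cos (θ - φ) := by
    intro ρ θ
    rw [Real.cos_sub, ← hA, ← hB]; ring
  set F : ℝ × ℝ → ℝ := fun p => p.1 * (2 - 2 * Real.cos (K * p.1 * Real.cos (p.2 - φ)))
    with hFdef
  have hstep : (∫ p in Ioo (0:ℝ) r ×ˢ Ioo (-π) π,
        p.1 * (2 - 2 * Real.cos (a * (polarCoord.symm p).1 + b * (polarCoord.symm p).2)))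
      = ∫ p in Ioo (0:ℝ) r ×ˢ Ioo (-π) π, F p := by
    refine MeasureTheory.setIntegral_congr_fun (measurableSet_Ioo.prod measurableSet_Ioo)
      fun p _ => ?_
    simp only [polarCoord_symm_apply, hFdef, hcos p.1 p.2]
  rw [hstep]
  have hFc : Continuous F := by fun_prop
  have hFi : IntegrableOn F (Ioo (0:ℝ) r ×ˢ Ioo (-π) π) := by
    have h0 : IntegrableOn F (Icc (0:ℝ) r ×ˢ Icc (-π) π) :=
      (hFc.continuousOn).integrableOn_compact (isCompact_Icc.prod isCompact_Icc)
    exact h0.mono_set (Set.prod_mono Ioo_subset_Icc_self Ioo_subset_Icc_self)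
  rw [MeasureTheory.Measure.volume_eq_prod] at hFi ⊢
  rw [MeasureTheory.setIntegral_prod F hFi]
  have h1 : (∫ ρ in Ioo (0:ℝ) r, ∫ θ in Ioo (-π) π, F (ρ, θ))
      = ∫ ρ in Ioo (0:ℝ) r, 4 * π * (ρ * (1 - J0 (K * ρ))) := by
    refine MeasureTheory.setIntegral_congr_fun measurableSet_Ioo fun ρ _ => ?_
    exact inner_eval' K φ ρ
  rw [h1, ← MeasureTheory.integral_Ioc_eq_integral_Ioo,
    ← intervalIntegral.integral_of_le hr.le, intervalIntegral.integral_const_mul]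
  have h2 := intervalIntegral.integral_comp_mul_left (f := fun x => x * (1 - J0 x))
    (a := (0:ℝ)) (b := r) (c := K) hK.ne'
  simp only [mul_zero, smul_eq_mul] at h2
  have h3 : (∫ x in (0:ℝ)..r, K * x * (1 - J0 (K * x)))
      = K * ∫ x in (0:ℝ)..r, x * (1 - J0 (K * x)) := by
    rw [← intervalIntegral.integral_const_mul]
    congr 1; ext x; ring
  rw [h3] at h2
  have h4 : (∫ x in (0:ℝ)..r, x * (1 - J0 (K * x)))
      = K⁻¹ * (K⁻¹ * ∫ x in (0:ℝ)..(K * r), x * (1 - J0 x)) := by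
    field_simp at h2 ⊢
    linarith [h2]
  rw [h4, sq, mul_inv]
  ring

/-- For every `k ∈ ℤ²`, `k ≠ 0`, and every `r > 0`,
`⨍_{B_r(0)} |e^{ik·h} − 1|² dh = (4/(|k|r)²) ∫₀^{|k|r} x(1 − J₀(x)) dx`. -/
theorem stmt16 (k : Fin 2 → ℤ) (hk : k ≠ 0) (r : ℝ) (hr : 0 < r) :
    (π * r ^ 2)⁻¹ *
        (∫ h in ball2 r,
          ‖Complex.exp (Complex.I * ((k 0 : ℂ) * (h 0 : ℂ) + (k 1 : ℂ) * (h 1 : ℂ)))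
            - 1‖ ^ 2)
      = 4 / (Real.sqrt ((k 0 : ℝ) ^ 2 + (k 1 : ℝ) ^ 2) * r) ^ 2 *
          ∫ x in (0 : ℝ)..(Real.sqrt ((k 0 : ℝ) ^ 2 + (k 1 : ℝ) ^ 2) * r),
            x * (1 - J0 x) := by
  set a : ℝ := (k 0 : ℝ) with ha
  set b : ℝ := (k 1 : ℝ) with hb
  have hab : ¬(a = 0 ∧ b = 0) := by
    rintro ⟨h0, h1⟩
    apply hk
    funext i
    fin_cases i
    · show (k 0 : ℤ) = 0
      exact_mod_cast ha.symm.trans h0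
    · show (k 1 : ℤ) = 0
      exact_mod_cast hb.symm.trans h1
  set K := Real.sqrt (a ^ 2 + b ^ 2) with hK
  have hab2 : 0 < a^2 + b^2 := by
    rcases not_and_or.mp hab with h | h
    · have := (sq_nonneg a).lt_of_ne (Ne.symm (pow_ne_zero 2 h)); nlinarith [sq_nonneg b]
    · have := (sq_nonneg b).lt_of_ne (Ne.symm (pow_ne_zero 2 h)); nlinarith [sq_nonneg a]
  have hKpos : 0 < K := Real.sqrt_pos.mpr hab2
  have hInt : ∀ h : V,
      ‖Complex.exp (Complex.I * ((k 0 : ℂ) * (h 0 : ℂ) + (k 1 : ℂ) * (h 1 : ℂ))) - 1‖ ^ 2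
        = 2 - 2 * Real.cos (a * h 0 + b * h 1) := by
    intro h
    have : ((k 0 : ℂ) * (h 0 : ℂ) + (k 1 : ℂ) * (h 1 : ℂ)) = ((a * h 0 + b * h 1 : ℝ) : ℂ) := by
      push_cast [ha, hb]; ring
    rw [this]
    exact norm_exp_sub_one' _
  have hT := transfer' r (fun x y => 2 - 2 * Real.cos (a * x + b * y))
  have hP := polar_step' r hr (fun p => 2 - 2 * Real.cos (a * p.1 + b * p.2))
  have hC := core' a b r hab hr
  rw [← hK] at hC
  have hKsq : K ^ 2 = a ^ 2 + b ^ 2 := Real.sq_sqrt hab2.le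
  simp only [hInt]
  rw [hT, hP, hC, mul_pow]
  have hπ : (π : ℝ) ≠ 0 := Real.pi_ne_zero
  rw [div_eq_mul_inv, mul_inv]
  rw [eq_comm]
  field_simp
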